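/- For every field k there exists a finite-dimensional k-algebra A of k-dimension 8 which is not self-injective but such that every simple left A-module is reflexive. -/

import Mathlib

universe u

/-- The evaluation map `φ_M` from a left `R`-module `M` into its double `R`-dual
`M** = Hom_{Rᵒᵖ}(Hom_R(M, R), R)`. -/
def dualEval (R : Type u) [Ring R] (M : Type u) [AddCommGroup M] [Module R M] :
    M →ₗ[R] ((M →ₗ[R] R) →ₗ[Rᵐᵒᵖ] R) where
  toFun m :=
    { toFun := fun f => f m
      map_add' := fun f g => rfl
      map_smul' := fun a f => rfl }
  map_add' m m' := by ext f; simp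
  map_smul' a m := by ext f; simp

/-- An 8-dimensional algebra: the path algebra of the quiver with vertices 0, 1 and
arrows a : 0 → 0, b : 0 → 1, c : 1 → 0, d : 1 → 0, modulo the relations that the
only nonzero length-2 paths are a*c and b*d (and all length-3 paths vanish).
Coordinates: c0 = e₀, c1 = e₁, c2 = a, c3 = b, c4 = c, c5 = d, c6 = a*c, c7 = b*d. -/
@[ext]
structure A8 (k : Type u) : Type u where
  (c0 c1 c2 c3 c4 c5 c6 c7 : k)

namespace A8

variable {k : Type u} [Field k]

private def add' (x y : A8 k) : A8 k := ⟨x.c0+y.c0,x.c1+y.c1,x.c2+y.c2,x.c3+y.c3,x.c4+y.c4,x.c5+y.c5,x.c6+y.c6,x.c7+y.c7⟩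
private def neg' (x : A8 k) : A8 k := ⟨-x.c0,-x.c1,-x.c2,-x.c3,-x.c4,-x.c5,-x.c6,-x.c7⟩
private def smul' (r : k) (x : A8 k) : A8 k := ⟨r*x.c0,r*x.c1,r*x.c2,r*x.c3,r*x.c4,r*x.c5,r*x.c6,r*x.c7⟩
private def mul' (x y : A8 k) : A8 k := ⟨x.c0*y.c0,x.c1*y.c1,x.c2*y.c0 + x.c0*y.c2,x.c3*y.c0 + x.c1*y.c3,x.c4*y.c1 + x.c0*y.c4,x.c5*y.c1 + x.c0*y.c5,x.c6*y.c1 + x.c0*y.c6 + x.c2*y.c4,x.c7*y.c1 + x.c1*y.c7 + x.c3*y.c5⟩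
private def zero' : A8 k := (⟨0,0,0,0,0,0,0,0⟩ : A8 k)
private def one' : A8 k := (⟨1,1,0,0,0,0,0,0⟩ : A8 k)

private theorem add_assoc' (x y z : A8 k) : add' (add' x y) z = add' x (add' y z) := by
  ext <;> simp [add'] <;> ring
private theorem zero_add' (x : A8 k) : add' zero' x = x := by ext <;> simp [add', zero']
private theorem add_zero' (x : A8 k) : add' x zero' = x := by ext <;> simp [add', zero']
private theorem add_comm' (x y : A8 k) : add' x y = add' y x := by
  ext <;> simp [add'] <;> ring
private theorem neg_add_cancel' (x : A8 k) : add' (neg' x) x = zero' := by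
  ext <;> simp [add', neg', zero']
private theorem left_distrib' (x y z : A8 k) :
    mul' x (add' y z) = add' (mul' x y) (mul' x z) := by
  ext <;> simp [add', mul'] <;> ring
private theorem right_distrib' (x y z : A8 k) :
    mul' (add' x y) z = add' (mul' x z) (mul' y z) := by
  ext <;> simp [add', mul'] <;> ring
private theorem zero_mul' (x : A8 k) : mul' zero' x = zero' := by ext <;> simp [mul', zero']
private theorem mul_zero' (x : A8 k) : mul' x zero' = zero' := by ext <;> simp [mul', zero']
private theorem mul_assoc' (x y z : A8 k) : mul' (mul' x y) z = mul' x (mul' y z) := by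
  ext <;> simp [mul'] <;> ring
private theorem one_mul' (x : A8 k) : mul' one' x = x := by ext <;> simp [mul', one']
private theorem mul_one' (x : A8 k) : mul' x one' = x := by ext <;> simp [mul', one']
private theorem one_smul' (x : A8 k) : smul' 1 x = x := by ext <;> simp [smul']
private theorem mul_smul' (r s : k) (x : A8 k) : smul' (r * s) x = smul' r (smul' s x) := by
  ext <;> simp [smul'] <;> ring
private theorem smul_zero' (r : k) : smul' r zero' = zero' := by ext <;> simp [smul', zero']
private theorem smul_add' (r : k) (x y : A8 k) :
    smul' r (add' x y) = add' (smul' r x) (smul' r y) := by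
  ext <;> simp [smul', add'] <;> ring
private theorem add_smul' (r s : k) (x : A8 k) :
    smul' (r + s) x = add' (smul' r x) (smul' s x) := by
  ext <;> simp [smul', add'] <;> ring
private theorem zero_smul' (x : A8 k) : smul' 0 x = zero' := by ext <;> simp [smul', zero']
private theorem smul_mul' (r : k) (x y : A8 k) :
    mul' (smul' r x) y = smul' r (mul' x y) := by
  ext <;> simp [smul', mul'] <;> ring
private theorem mul_smul'' (r : k) (x y : A8 k) :
    mul' x (smul' r y) = smul' r (mul' x y) := by
  ext <;> simp [smul', mul'] <;> ring

instance instAddCommGroup : AddCommGroup (A8 k) where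
  add := add'
  zero := zero'
  neg := neg'
  add_assoc := add_assoc'
  zero_add := zero_add'
  add_zero := add_zero'
  add_comm := add_comm'
  neg_add_cancel := neg_add_cancel'
  nsmul := @nsmulRec _ ⟨zero'⟩ ⟨add'⟩
  zsmul := @zsmulRec _ ⟨zero'⟩ ⟨add'⟩ ⟨neg'⟩ (@nsmulRec _ ⟨zero'⟩ ⟨add'⟩)

instance instRing : Ring (A8 k) := { instAddCommGroup with
  mul := mul'
  one := one'
  left_distrib := left_distrib'
  right_distrib := right_distrib'
  zero_mul := zero_mul'
  mul_zero := mul_zero'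
  mul_assoc := mul_assoc'
  one_mul := one_mul'
  mul_one := mul_one' }

instance instModule : Module k (A8 k) where
  smul := smul'
  one_smul := one_smul'
  mul_smul := mul_smul'
  smul_zero := smul_zero'
  smul_add := smul_add'
  add_smul := add_smul'
  zero_smul := zero_smul'

instance instAlgebra : Algebra k (A8 k) :=
  Algebra.ofModule (fun r x y => smul_mul' r x y) (fun r x y => mul_smul'' r x y)
@[simp] lemma zero_c0 : (0 : A8 k).c0 = 0 := rfl
@[simp] lemma zero_c1 : (0 : A8 k).c1 = 0 := rfl
@[simp] lemma zero_c2 : (0 : A8 k).c2 = 0 := rfl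
@[simp] lemma zero_c3 : (0 : A8 k).c3 = 0 := rfl
@[simp] lemma zero_c4 : (0 : A8 k).c4 = 0 := rfl
@[simp] lemma zero_c5 : (0 : A8 k).c5 = 0 := rfl
@[simp] lemma zero_c6 : (0 : A8 k).c6 = 0 := rfl
@[simp] lemma zero_c7 : (0 : A8 k).c7 = 0 := rfl
@[simp] lemma add_c0 (x y : A8 k) : (x + y).c0 = x.c0 + y.c0 := rfl
@[simp] lemma add_c1 (x y : A8 k) : (x + y).c1 = x.c1 + y.c1 := rfl
@[simp] lemma add_c2 (x y : A8 k) : (x + y).c2 = x.c2 + y.c2 := rfl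
@[simp] lemma add_c3 (x y : A8 k) : (x + y).c3 = x.c3 + y.c3 := rfl
@[simp] lemma add_c4 (x y : A8 k) : (x + y).c4 = x.c4 + y.c4 := rfl
@[simp] lemma add_c5 (x y : A8 k) : (x + y).c5 = x.c5 + y.c5 := rfl
@[simp] lemma add_c6 (x y : A8 k) : (x + y).c6 = x.c6 + y.c6 := rfl
@[simp] lemma add_c7 (x y : A8 k) : (x + y).c7 = x.c7 + y.c7 := rfl
@[simp] lemma neg_c0 (x : A8 k) : (-x).c0 = -x.c0 := rfl
@[simp] lemma neg_c1 (x : A8 k) : (-x).c1 = -x.c1 := rfl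
@[simp] lemma neg_c2 (x : A8 k) : (-x).c2 = -x.c2 := rfl
@[simp] lemma neg_c3 (x : A8 k) : (-x).c3 = -x.c3 := rfl
@[simp] lemma neg_c4 (x : A8 k) : (-x).c4 = -x.c4 := rfl
@[simp] lemma neg_c5 (x : A8 k) : (-x).c5 = -x.c5 := rfl
@[simp] lemma neg_c6 (x : A8 k) : (-x).c6 = -x.c6 := rfl
@[simp] lemma neg_c7 (x : A8 k) : (-x).c7 = -x.c7 := rfl
@[simp] lemma smul_c0 (r : k) (x : A8 k) : (r • x).c0 = r * x.c0 := rfl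
@[simp] lemma smul_c1 (r : k) (x : A8 k) : (r • x).c1 = r * x.c1 := rfl
@[simp] lemma smul_c2 (r : k) (x : A8 k) : (r • x).c2 = r * x.c2 := rfl
@[simp] lemma smul_c3 (r : k) (x : A8 k) : (r • x).c3 = r * x.c3 := rfl
@[simp] lemma smul_c4 (r : k) (x : A8 k) : (r • x).c4 = r * x.c4 := rfl
@[simp] lemma smul_c5 (r : k) (x : A8 k) : (r • x).c5 = r * x.c5 := rfl
@[simp] lemma smul_c6 (r : k) (x : A8 k) : (r • x).c6 = r * x.c6 := rfl
@[simp] lemma smul_c7 (r : k) (x : A8 k) : (r • x).c7 = r * x.c7 := rfl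
@[simp] lemma mul_c0 (x y : A8 k) : (x * y).c0 = x.c0*y.c0 := rfl
@[simp] lemma mul_c1 (x y : A8 k) : (x * y).c1 = x.c1*y.c1 := rfl
@[simp] lemma mul_c2 (x y : A8 k) : (x * y).c2 = x.c2*y.c0 + x.c0*y.c2 := rfl
@[simp] lemma mul_c3 (x y : A8 k) : (x * y).c3 = x.c3*y.c0 + x.c1*y.c3 := rfl
@[simp] lemma mul_c4 (x y : A8 k) : (x * y).c4 = x.c4*y.c1 + x.c0*y.c4 := rfl
@[simp] lemma mul_c5 (x y : A8 k) : (x * y).c5 = x.c5*y.c1 + x.c0*y.c5 := rfl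
@[simp] lemma mul_c6 (x y : A8 k) : (x * y).c6 = x.c6*y.c1 + x.c0*y.c6 + x.c2*y.c4 := rfl
@[simp] lemma mul_c7 (x y : A8 k) : (x * y).c7 = x.c7*y.c1 + x.c1*y.c7 + x.c3*y.c5 := rfl
@[simp] lemma one_c0 : (1 : A8 k).c0 = 1 := rfl
@[simp] lemma one_c1 : (1 : A8 k).c1 = 1 := rfl
@[simp] lemma one_c2 : (1 : A8 k).c2 = 0 := rfl
@[simp] lemma one_c3 : (1 : A8 k).c3 = 0 := rfl
@[simp] lemma one_c4 : (1 : A8 k).c4 = 0 := rfl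
@[simp] lemma one_c5 : (1 : A8 k).c5 = 0 := rfl
@[simp] lemma one_c6 : (1 : A8 k).c6 = 0 := rfl
@[simp] lemma one_c7 : (1 : A8 k).c7 = 0 := rfl
@[simp] lemma algebraMap_c0 (r : k) : (algebraMap k (A8 k) r).c0 = r := by
  rw [Algebra.algebraMap_eq_smul_one]; simp
@[simp] lemma algebraMap_c1 (r : k) : (algebraMap k (A8 k) r).c1 = r := by
  rw [Algebra.algebraMap_eq_smul_one]; simp
@[simp] lemma algebraMap_c2 (r : k) : (algebraMap k (A8 k) r).c2 = 0 := by
  rw [Algebra.algebraMap_eq_smul_one]; simp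
@[simp] lemma algebraMap_c3 (r : k) : (algebraMap k (A8 k) r).c3 = 0 := by
  rw [Algebra.algebraMap_eq_smul_one]; simp
@[simp] lemma algebraMap_c4 (r : k) : (algebraMap k (A8 k) r).c4 = 0 := by
  rw [Algebra.algebraMap_eq_smul_one]; simp
@[simp] lemma algebraMap_c5 (r : k) : (algebraMap k (A8 k) r).c5 = 0 := by
  rw [Algebra.algebraMap_eq_smul_one]; simp
@[simp] lemma algebraMap_c6 (r : k) : (algebraMap k (A8 k) r).c6 = 0 := by
  rw [Algebra.algebraMap_eq_smul_one]; simp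
@[simp] lemma algebraMap_c7 (r : k) : (algebraMap k (A8 k) r).c7 = 0 := by
  rw [Algebra.algebraMap_eq_smul_one]; simp

@[simp] lemma sub_c0 (x y : A8 k) : (x - y).c0 = x.c0 - y.c0 := by simp [sub_eq_add_neg]
@[simp] lemma sub_c1 (x y : A8 k) : (x - y).c1 = x.c1 - y.c1 := by simp [sub_eq_add_neg]
@[simp] lemma sub_c2 (x y : A8 k) : (x - y).c2 = x.c2 - y.c2 := by simp [sub_eq_add_neg]
@[simp] lemma sub_c3 (x y : A8 k) : (x - y).c3 = x.c3 - y.c3 := by simp [sub_eq_add_neg]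
@[simp] lemma sub_c4 (x y : A8 k) : (x - y).c4 = x.c4 - y.c4 := by simp [sub_eq_add_neg]
@[simp] lemma sub_c5 (x y : A8 k) : (x - y).c5 = x.c5 - y.c5 := by simp [sub_eq_add_neg]
@[simp] lemma sub_c6 (x y : A8 k) : (x - y).c6 = x.c6 - y.c6 := by simp [sub_eq_add_neg]
@[simp] lemma sub_c7 (x y : A8 k) : (x - y).c7 = x.c7 - y.c7 := by simp [sub_eq_add_neg]

/-- The coordinate linear equivalence with `Fin 8 → k`. -/
def coordEquiv : A8 k ≃ₗ[k] (Fin 8 → k) where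
  toFun x := ![x.c0, x.c1, x.c2, x.c3, x.c4, x.c5, x.c6, x.c7]
  invFun f := ⟨f 0, f 1, f 2, f 3, f 4, f 5, f 6, f 7⟩
  left_inv x := rfl
  right_inv f := by
    funext i
    fin_cases i <;> rfl
  map_add' x y := by
    funext i
    fin_cases i <;> rfl
  map_smul' r x := by
    funext i
    fin_cases i <;> rfl

instance : FiniteDimensional k (A8 k) :=
  Module.Finite.of_basis (Module.Basis.ofEquivFun coordEquiv)

lemma finrank_eq : Module.finrank k (A8 k) = 8 := by
  rw [coordEquiv.finrank_eq]
  simp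

end A8

namespace A8

variable {k : Type u} [Field k]

/-- e₀, the idempotent at vertex 0. -/
def e0 : A8 k := ⟨1,0,0,0,0,0,0,0⟩
/-- e₁, the idempotent at vertex 1. -/
def e1 : A8 k := ⟨0,1,0,0,0,0,0,0⟩
/-- the loop a at vertex 0. -/
def av : A8 k := ⟨0,0,1,0,0,0,0,0⟩
/-- the arrow b : 0 → 1. -/
def bv : A8 k := ⟨0,0,0,1,0,0,0,0⟩
/-- the arrow c : 1 → 0. -/
def cv : A8 k := ⟨0,0,0,0,1,0,0,0⟩
/-- the arrow d : 1 → 0. -/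
def dv : A8 k := ⟨0,0,0,0,0,1,0,0⟩

/-- The key abstract lemma: if the simple module `S` has scalar action through
`ℓ : A8 k → k` and `w` generates the corresponding component of the left socle rigidly,
then `dualEval` is bijective on `S`. -/
theorem key (ℓ : A8 k → k) (w : A8 k) (hw0 : w ≠ 0)
    (hwact : ∀ a : A8 k, a * w = ℓ a • w)
    (H1 : ∀ v : A8 k, (∀ a : A8 k, a * v = ℓ a • v) → ∃ m : A8 k, v = w * m)
    (H2 : ∀ u : A8 k, (∀ m : A8 k, w * m = 0 → u * m = 0) → ∃ c : k, u = c • w)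
    (S : Type u) [AddCommGroup S] [Module (A8 k) S]
    (hS : IsSimpleModule (A8 k) S)
    (hact : ∀ (a : A8 k) (x : S), a • x = algebraMap k (A8 k) (ℓ a) • x) :
    Function.Bijective (dualEval (A8 k) S) := by
  classical
  obtain ⟨s₀, hs₀⟩ : ∃ s : S, s ≠ 0 := by
    have : Nontrivial S := IsSimpleModule.nontrivial (A8 k) S
    exact exists_ne 0
  -- every element of S is a k-multiple of s₀
  have rep : ∀ x : S, ∃ c : k, x = algebraMap k (A8 k) c • s₀ := by
    intro x
    let K : Submodule (A8 k) S :=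
      { carrier := {x | ∃ c : k, x = algebraMap k (A8 k) c • s₀}
        add_mem' := by
          rintro y z ⟨c, rfl⟩ ⟨c', rfl⟩
          exact ⟨c + c', by rw [map_add, add_smul]⟩
        zero_mem' := ⟨0, by simp⟩
        smul_mem' := by
          rintro a y ⟨c, rfl⟩
          refine ⟨ℓ (a * algebraMap k (A8 k) c), ?_⟩
          rw [← mul_smul, hact (a * algebraMap k (A8 k) c) s₀] }
    have hK : K = ⊤ := by
      rcases hS.1.2 K with h | h
      · exfalso
        have : s₀ ∈ K := ⟨1, by simp⟩
        rw [h] at this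
        exact hs₀ (by simpa using this)
      · exact h
    have : x ∈ K := by rw [hK]; trivial
    exact this
  have repu : ∀ c c' : k, algebraMap k (A8 k) c • s₀ = algebraMap k (A8 k) c' • s₀ → c = c' := by
    intro c c' h
    by_contra hne
    have h0 : algebraMap k (A8 k) (c - c') • s₀ = 0 := by
      rw [map_sub, sub_smul, h, sub_self]
    have hs : s₀ = 0 := by
      have h2 : algebraMap k (A8 k) ((c - c')⁻¹ * (c - c')) • s₀ = 0 := by
        rw [map_mul, mul_smul, h0, smul_zero]
      rwa [inv_mul_cancel₀ (sub_ne_zero.2 hne), map_one, one_smul] at h2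
    exact hs₀ hs
  choose θ hθ using rep
  have θadd : ∀ x y : S, θ (x + y) = θ x + θ y := by
    intro x y
    apply repu
    rw [← hθ (x + y), map_add, add_smul, ← hθ x, ← hθ y]
  have θsmul : ∀ (a : A8 k) (x : S), θ (a • x) = ℓ a * θ x := by
    intro a x
    apply repu
    rw [← hθ (a • x), map_mul, mul_smul]
    conv_lhs => rw [hθ x, hact]
  have smulz : ∀ c : k, c • w = 0 → c = 0 := by
    intro c hc
    by_contra hne
    apply hw0
    have h2 : (c⁻¹ * c) • w = 0 := by rw [mul_smul, hc, smul_zero]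
    rwa [inv_mul_cancel₀ hne, one_smul] at h2
  -- the linear functional x ↦ θ x • w
  let f : S →ₗ[A8 k] A8 k :=
    { toFun := fun x => θ x • w
      map_add' := by
        intro x y
        show θ (x + y) • w = θ x • w + θ y • w
        rw [θadd, add_smul]
      map_smul' := by
        intro a x
        show θ (a • x) • w = a • (θ x • w)
        rw [smul_eq_mul, mul_smul_comm, hwact, θsmul, smul_smul, mul_comm] }
  have hfx : ∀ x : S, f x = θ x • w := fun _ => rfl
  constructor
  · -- injectivity
    intro x y hxy
    have h0 : dualEval (A8 k) S (x - y) = 0 := by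
      rw [map_sub, hxy, sub_self]
    have h1 : f (x - y) = 0 := by
      have := congrArg (fun G => G f) h0
      exact this
    rw [hfx] at h1
    have h2 : θ (x - y) = 0 := smulz _ h1
    have h3 : x - y = 0 := by
      rw [hθ (x - y), h2, map_zero, zero_smul]
    exact sub_eq_zero.1 h3
  · -- surjectivity
    intro G
    set u := G f with hu
    have hu0 : ∀ m : A8 k, w * m = 0 → u * m = 0 := by
      intro m hm
      have hfm : (MulOpposite.op m) • f = 0 := by
        apply LinearMap.ext
        intro x
        rw [LinearMap.smul_apply, LinearMap.zero_apply, MulOpposite.smul_eq_mul_unop,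
          MulOpposite.unop_op, hfx, smul_mul_assoc, hm, smul_zero]
      calc u * m = (MulOpposite.op m) • u := by rw [MulOpposite.smul_eq_mul_unop]; rfl
        _ = G ((MulOpposite.op m) • f) := (G.map_smul _ _).symm
        _ = 0 := by rw [hfm, map_zero]
    obtain ⟨c, hc⟩ := H2 u hu0
    refine ⟨algebraMap k (A8 k) c • s₀, ?_⟩
    apply LinearMap.ext
    intro f'
    have hv : ∀ a : A8 k, a * f' s₀ = ℓ a • f' s₀ := by
      intro a
      calc a * f' s₀ = a • f' s₀ := (smul_eq_mul _ _).symm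
        _ = f' (a • s₀) := (f'.map_smul a s₀).symm
        _ = f' (algebraMap k (A8 k) (ℓ a) • s₀) := by rw [hact]
        _ = algebraMap k (A8 k) (ℓ a) • f' s₀ := f'.map_smul _ _
        _ = ℓ a • f' s₀ := algebraMap_smul _ _ _
    obtain ⟨m, hm⟩ := H1 _ hv
    have hf' : f' = (MulOpposite.op m) • f := by
      apply LinearMap.ext
      intro x
      rw [LinearMap.smul_apply, MulOpposite.smul_eq_mul_unop, MulOpposite.unop_op, hfx,
        smul_mul_assoc, ← hm]
      conv_lhs => rw [hθ x]
      rw [f'.map_smul, smul_eq_mul, Algebra.smul_def]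
    show f' (algebraMap k (A8 k) c • s₀) = G f'
    calc f' (algebraMap k (A8 k) c • s₀)
        = algebraMap k (A8 k) c • f' s₀ := f'.map_smul _ _
      _ = c • f' s₀ := algebraMap_smul _ _ _
      _ = c • (w * m) := by rw [hm]
      _ = (c • w) * m := (smul_mul_assoc _ _ _).symm
      _ = u * m := by rw [hc]
      _ = (MulOpposite.op m) • u := by rw [MulOpposite.smul_eq_mul_unop, MulOpposite.unop_op]
      _ = G ((MulOpposite.op m) • f) := (G.map_smul _ _).symm
      _ = G f' := by rw [← hf']

end A8

namespace A8

variable {k : Type u} [Field k]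

theorem J3 (a b c : A8 k) (ha0 : a.c0 = 0) (ha1 : a.c1 = 0) (hb0 : b.c0 = 0)
    (hb1 : b.c1 = 0) (hc0 : c.c0 = 0) (hc1 : c.c1 = 0) : a * (b * c) = 0 := by
  ext <;> simp [ha0, ha1, hb0, hb1, hc0, hc1]

/-- The radical kills every simple module. -/
theorem rad_kills (S : Type u) [AddCommGroup S] [Module (A8 k) S]
    (hS : IsSimpleModule (A8 k) S) :
    ∀ a : A8 k, a.c0 = 0 → a.c1 = 0 → ∀ x : S, a • x = 0 := by
  let T : Submodule (A8 k) S :=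
    { carrier := {x | ∀ a : A8 k, a.c0 = 0 → a.c1 = 0 → a • x = 0}
      zero_mem' := fun a _ _ => smul_zero a
      add_mem' := by
        intro x y hx hy a h0 h1
        rw [smul_add, hx a h0 h1, hy a h0 h1, add_zero]
      smul_mem' := by
        intro b x hx a h0 h1
        rw [← mul_smul]
        exact hx (a * b) (by simp [h0]) (by simp [h1]) }
  have hT : T = ⊤ := by
    rcases hS.1.2 T with h | h
    · exfalso
      have : Nontrivial S := IsSimpleModule.nontrivial (A8 k) S
      obtain ⟨s₀, hs₀⟩ := exists_ne (0 : S)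
      have hmemT : ∀ y : S, y ∈ T → y = 0 := by
        intro y hy
        rw [h] at hy
        simpa using hy
      by_cases h1 : s₀ ∈ T
      · exact hs₀ (hmemT _ h1)
      · simp only [T, Submodule.mem_mk, AddSubmonoid.mem_mk, AddSubsemigroup.mem_mk,
          Set.mem_setOf_eq] at h1
        push_neg at h1
        obtain ⟨a, ha0, ha1, has⟩ := h1
        by_cases h2 : a • s₀ ∈ T
        · exact has (hmemT _ h2)
        · simp only [T, Submodule.mem_mk, AddSubmonoid.mem_mk, AddSubsemigroup.mem_mk,
            Set.mem_setOf_eq] at h2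
          push_neg at h2
          obtain ⟨b, hb0, hb1, hbs⟩ := h2
          apply hbs
          apply hmemT
          intro c hc0 hc1
          rw [← mul_smul, ← mul_smul, mul_assoc, J3 c b a hc0 hc1 hb0 hb1 ha0 ha1, zero_smul]
    · exact h
  intro a h0 h1 x
  have : x ∈ T := by rw [hT]; trivial
  exact this a h0 h1

/-- On a simple module, the action is through one of the two characters. -/
theorem action_cases (S : Type u) [AddCommGroup S] [Module (A8 k) S]
    (hS : IsSimpleModule (A8 k) S) :
    (∀ (a : A8 k) (x : S), a • x = algebraMap k (A8 k) a.c0 • x) ∨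
    (∀ (a : A8 k) (x : S), a • x = algebraMap k (A8 k) a.c1 • x) := by
  have hJ := rad_kills S hS
  let φ : S →ₗ[A8 k] S :=
    { toFun := fun x => (e0 : A8 k) • x
      map_add' := fun x y => smul_add _ x y
      map_smul' := by
        intro a x
        simp only [RingHom.id_apply]
        have hcom : (e0 * a - a * e0 : A8 k) • x = 0 :=
          hJ _ (by simp [e0]) (by simp [e0]) x
        have h2 : (e0 * a : A8 k) • x = (a * e0 : A8 k) • x :=
          sub_eq_zero.1 (by rwa [sub_smul] at hcom)
        rw [← mul_smul, h2, mul_smul] }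
  rcases hS.1.2 (LinearMap.ker φ) with hker | hker
  · -- e0 acts as identity; action through c0
    left
    have hid : ∀ x : S, (e0 : A8 k) • x = x := by
      intro x
      have h2 : φ (φ x - x) = 0 := by
        show (e0 : A8 k) • ((e0 : A8 k) • x - x) = 0
        rw [smul_sub, ← mul_smul]
        have hee : (e0 * e0 : A8 k) = e0 := by ext <;> simp [e0]
        rw [hee, sub_self]
      have h3 : φ x - x ∈ LinearMap.ker φ := h2
      rw [hker] at h3
      have h4 : φ x - x = 0 := by simpa using h3
      have := sub_eq_zero.1 h4
      exact this
    intro a x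
    have he1 : ((1 : A8 k) - e0) • x = 0 := by
      rw [sub_smul, one_smul, hid, sub_self]
    have hj : (a - algebraMap k (A8 k) a.c0 - (a.c1 - a.c0) • ((1 : A8 k) - e0)) • x = 0 := by
      apply hJ _ ?_ ?_ x
      · simp [e0]
      · simp [e0]
    have hmid : ((a.c1 - a.c0) • ((1 : A8 k) - e0)) • x = 0 := by
      rw [Algebra.smul_def, mul_smul, he1, smul_zero]
    have h5 : a • x - algebraMap k (A8 k) a.c0 • x = 0 := by
      have h6 := hj
      rw [sub_smul, sub_smul, hmid, sub_zero] at h6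
      exact h6
    exact sub_eq_zero.1 h5
  · -- e0 acts as zero; action through c1
    right
    have hz : ∀ x : S, (e0 : A8 k) • x = 0 := by
      intro x
      have : x ∈ LinearMap.ker φ := by rw [hker]; trivial
      simpa [φ] using this
    intro a x
    have hj : (a - algebraMap k (A8 k) a.c1 - (a.c0 - a.c1) • (e0 : A8 k)) • x = 0 := by
      apply hJ _ ?_ ?_ x
      · simp [e0]
      · simp [e0]
    have hmid : ((a.c0 - a.c1) • (e0 : A8 k)) • x = 0 := by
      rw [Algebra.smul_def, mul_smul, hz, smul_zero]
    have h5 : a • x - algebraMap k (A8 k) a.c1 • x = 0 := by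
      have h6 := hj
      rw [sub_smul, sub_smul, hmid, sub_zero] at h6
      exact h6
    exact sub_eq_zero.1 h5

end A8

namespace A8

variable {k : Type u} [Field k]

theorem av_ne_zero : (av : A8 k) ≠ 0 := fun h => one_ne_zero (congrArg A8.c2 h)

theorem bv_ne_zero : (bv : A8 k) ≠ 0 := fun h => one_ne_zero (congrArg A8.c3 h)

theorem hwact0 : ∀ a : A8 k, a * av = a.c0 • av := by
  intro a; ext <;> simp [av]

theorem hwact1 : ∀ a : A8 k, a * bv = a.c1 • bv := by
  intro a; ext <;> simp [bv]

theorem H1_0 : ∀ v : A8 k, (∀ a : A8 k, a * v = a.c0 • v) → ∃ m : A8 k, v = av * m := by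
  intro v hv
  have h1 : v.c1 = 0 := by have := congrArg A8.c1 (hv e1); simpa [e1] using this
  have h3 : v.c3 = 0 := by have := congrArg A8.c3 (hv e1); simpa [e1] using this
  have h7 : v.c7 = 0 := by have := congrArg A8.c7 (hv e1); simpa [e1, h1, h3] using this
  have h0 : v.c0 = 0 := by have := congrArg A8.c2 (hv av); simpa [av] using this
  have h4 : v.c4 = 0 := by have := congrArg A8.c6 (hv av); simpa [av, h0] using this
  have h5 : v.c5 = 0 := by have := congrArg A8.c7 (hv bv); simpa [bv, h1, h7] using this
  exact ⟨⟨v.c2, 0, 0, 0, v.c6, 0, 0, 0⟩, by ext <;> simp [av, h0, h1, h3, h4, h5, h7]⟩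

theorem H2_0 : ∀ u : A8 k, (∀ m : A8 k, av * m = 0 → u * m = 0) → ∃ c : k, u = c • av := by
  intro u hu
  have he1 : (u * e1 : A8 k) = 0 := hu e1 (by ext <;> simp [av, e1])
  have h1 : u.c1 = 0 := by simpa [e1] using congrArg A8.c1 he1
  have h4 : u.c4 = 0 := by simpa [e1] using congrArg A8.c4 he1
  have h5 : u.c5 = 0 := by simpa [e1] using congrArg A8.c5 he1
  have h6 : u.c6 = 0 := by simpa [e1] using congrArg A8.c6 he1
  have h7 : u.c7 = 0 := by simpa [e1] using congrArg A8.c7 he1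
  have hav : (u * av : A8 k) = 0 := hu av (by ext <;> simp [av])
  have h0 : u.c0 = 0 := by simpa [av] using congrArg A8.c2 hav
  have hdv : (u * dv : A8 k) = 0 := hu dv (by ext <;> simp [av, dv])
  have h3 : u.c3 = 0 := by simpa [dv, h1] using congrArg A8.c7 hdv
  exact ⟨u.c2, by ext <;> simp [av, h0, h1, h3, h4, h5, h6, h7]⟩

theorem H1_1 : ∀ v : A8 k, (∀ a : A8 k, a * v = a.c1 • v) → ∃ m : A8 k, v = bv * m := by
  intro v hv
  have h0 : v.c0 = 0 := by have := congrArg A8.c0 (hv e0); simpa [e0] using this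
  have h2 : v.c2 = 0 := by have := congrArg A8.c2 (hv e0); simpa [e0, h0] using this
  have h4 : v.c4 = 0 := by have := congrArg A8.c4 (hv e0); simpa [e0] using this
  have h5 : v.c5 = 0 := by have := congrArg A8.c5 (hv e0); simpa [e0] using this
  have h6 : v.c6 = 0 := by have := congrArg A8.c6 (hv e0); simpa [e0, h2, h4] using this
  have h1 : v.c1 = 0 := by have := congrArg A8.c4 (hv cv); simpa [cv, h4] using this
  exact ⟨⟨v.c3, 0, 0, 0, 0, v.c7, 0, 0⟩, by ext <;> simp [bv, h0, h1, h2, h4, h5, h6]⟩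

theorem H2_1 : ∀ u : A8 k, (∀ m : A8 k, bv * m = 0 → u * m = 0) → ∃ c : k, u = c • bv := by
  intro u hu
  have he1 : (u * e1 : A8 k) = 0 := hu e1 (by ext <;> simp [bv, e1])
  have h1 : u.c1 = 0 := by simpa [e1] using congrArg A8.c1 he1
  have h4 : u.c4 = 0 := by simpa [e1] using congrArg A8.c4 he1
  have h5 : u.c5 = 0 := by simpa [e1] using congrArg A8.c5 he1
  have h6 : u.c6 = 0 := by simpa [e1] using congrArg A8.c6 he1
  have h7 : u.c7 = 0 := by simpa [e1] using congrArg A8.c7 he1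
  have hav : (u * av : A8 k) = 0 := hu av (by ext <;> simp [bv, av])
  have h0 : u.c0 = 0 := by simpa [av] using congrArg A8.c2 hav
  have hcv : (u * cv : A8 k) = 0 := hu cv (by ext <;> simp [bv, cv])
  have h2 : u.c2 = 0 := by simpa [cv, h0, h6] using congrArg A8.c6 hcv
  exact ⟨u.c3, by ext <;> simp [bv, h0, h1, h2, h4, h5, h6, h7]⟩

/-- `A8 k` is not self-injective. -/
theorem not_injective : ¬ Module.Injective (A8 k) (A8 k) := by
  intro h
  let L : Submodule (A8 k) (A8 k) :=
    { carrier := {x | x.c0 = 0 ∧ x.c1 = 0 ∧ x.c4 = 0 ∧ x.c5 = 0 ∧ x.c6 = 0 ∧ x.c7 = 0}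
      zero_mem' := by simp
      add_mem' := by
        rintro x y ⟨x0, x1, x4, x5, x6, x7⟩ ⟨y0, y1, y4, y5, y6, y7⟩
        refine ⟨?_, ?_, ?_, ?_, ?_, ?_⟩ <;> simp [x0, x1, x4, x5, x6, x7, y0, y1, y4, y5, y6, y7]
      smul_mem' := by
        rintro a x ⟨x0, x1, x4, x5, x6, x7⟩
        refine ⟨?_, ?_, ?_, ?_, ?_, ?_⟩ <;>
          simp [smul_eq_mul, x0, x1, x4, x5, x6, x7] }
  let g : L →ₗ[A8 k] A8 k :=
    { toFun := fun v => (v : A8 k).c2 • av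
      map_add' := by
        intro x y
        show ((x : A8 k) + (y : A8 k)).c2 • av = _
        rw [add_c2, add_smul]
      map_smul' := by
        rintro a ⟨x, hx⟩
        simp only [RingHom.id_apply]
        show ((a * x : A8 k)).c2 • av = a • ((x.c2 : k) • av)
        rw [smul_comm, smul_eq_mul, hwact0, mul_c2, hx.1, mul_zero, zero_add, smul_smul,
          mul_comm] }
  obtain ⟨h', hh⟩ := h.out L.subtype (Submodule.injective_subtype L) g
  have hx : ∀ y : A8 k, h' y = y * h' 1 := by
    intro y
    conv_lhs => rw [← mul_one y, ← smul_eq_mul, h'.map_smul, smul_eq_mul]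
  have havL : (av : A8 k) ∈ L := by exact ⟨rfl, rfl, rfl, rfl, rfl, rfl⟩
  have hbvL : (bv : A8 k) ∈ L := by exact ⟨rfl, rfl, rfl, rfl, rfl, rfl⟩
  have h1 : (av : A8 k) * h' 1 = av := by
    have := hh ⟨av, havL⟩
    simp only [Submodule.coe_subtype] at this
    rw [hx] at this
    rw [this]
    show ((av : A8 k)).c2 • (av : A8 k) = av
    simp [av]
  have h2 : (bv : A8 k) * h' 1 = 0 := by
    have := hh ⟨bv, hbvL⟩
    simp only [Submodule.coe_subtype] at this
    rw [hx] at this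
    rw [this]
    show ((bv : A8 k)).c2 • (av : A8 k) = 0
    simp [bv]
  have e1' : (h' 1).c0 = 1 := by
    have := congrArg A8.c2 h1
    simpa [av] using this
  have e2' : (h' 1).c0 = 0 := by
    have := congrArg A8.c3 h2
    simpa [bv] using this
  rw [e1'] at e2'
  exact one_ne_zero e2'

end A8

/-- For every field `k` there exists a finite-dimensional `k`-algebra `A` of `k`-dimension 8
which is not self-injective but such that every simple left `A`-module is reflexive. -/
theorem exists_dim8_algebra_not_selfinjective_all_simples_reflexive
    (k : Type u) [Field k] :
    ∃ A : AlgCat.{u} k,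
      FiniteDimensional k A ∧
      Module.finrank k A = 8 ∧
      ¬ Module.Injective A A ∧
      (∀ (S : Type u) [AddCommGroup S] [Module A S],
        IsSimpleModule A S → Function.Bijective (dualEval A S)) := by
  refine ⟨AlgCat.of k (A8 k), ?_, ?_, ?_, ?_⟩
  · exact inferInstanceAs (FiniteDimensional k (A8 k))
  · exact A8.finrank_eq
  · exact A8.not_injective
  · intro S _ _ hS
    rcases A8.action_cases S hS with h | h
    · exact A8.key (fun a => a.c0) A8.av A8.av_ne_zero A8.hwact0 A8.H1_0 A8.H2_0 S hS h
    · exact A8.key (fun a => a.c1) A8.bv A8.bv_ne_zero A8.hwact1 A8.H1_1 A8.H2_1 S hS h
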